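/- Let d ≥ 1 and define, for x, z : Fin d → ℝ, the Positive Random Feature φ(x; z) := exp(⟨z, x⟩/d^{1/4} − ‖x‖²/(2√d)), where ⟨z, x⟩ = ∑ᵢ zᵢxᵢ and ‖x‖² = ∑ᵢ xᵢ². Then for all q, k : Fin d → ℝ, ∫ φ(q; z)·φ(k; z) dγ_d(z) = exp(⟨q, k⟩/√d), where γ_d = Measure.pi (fun _ => gaussianReal 0 1) is the d-dimensional standard Gaussian measure. -/

import Mathlib

open MeasureTheory ProbabilityTheory

open scoped NNReal ENNReal
open Real in
lemma gauss_mgf (c : ℝ) :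
    ∫ x, Real.exp (c * x) ∂(gaussianReal 0 1) = Real.exp (c ^ 2 / 2) := by
  rw [gaussianReal_of_var_ne_zero 0 one_ne_zero]
  have hmeas : Measurable fun x => Real.toNNReal (gaussianPDFReal 0 1 x) :=
    (measurable_gaussianPDFReal 0 1).real_toNNReal
  have hdens : gaussianPDF 0 1 = fun x => ((Real.toNNReal (gaussianPDFReal 0 1 x) : ℝ≥0) : ℝ≥0∞) := by
    ext x; simp [gaussianPDF, ENNReal.ofReal]
  rw [hdens, integral_withDensity_eq_integral_smul hmeas]
  have key : ∀ x : ℝ, (Real.toNNReal (gaussianPDFReal 0 1 x) : ℝ≥0) • Real.exp (c * x) =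
      (Real.sqrt (2 * π))⁻¹ * (Real.exp (c ^ 2 / 2) * Real.exp (-(1/2) * (x - c) ^ 2)) := by
    intro x
    rw [NNReal.smul_def, smul_eq_mul, Real.coe_toNNReal _ (gaussianPDFReal_nonneg 0 1 x)]
    rw [gaussianPDFReal]
    push_cast
    rw [mul_assoc]
    simp only [← Real.exp_add, ← mul_assoc]
    congr 1
    · norm_num
    · rw [Real.exp_eq_exp]; ring
  simp_rw [key]
  rw [integral_const_mul, integral_const_mul,
    integral_sub_right_eq_self (fun x : ℝ => Real.exp (-(1/2) * x ^ 2)) c,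
    integral_gaussian]
  rw [show π / (1/2) = 2 * π by ring]
  have h : Real.sqrt (2 * π) ≠ 0 := by positivity
  field_simp

lemma pi_gauss_prod (n : ℕ) (f : Fin n → ℝ → ℝ) :
    ∫ z, ∏ i, f i (z i) ∂(Measure.pi fun _ : Fin n => gaussianReal 0 1) =
      ∏ i, ∫ x, f i x ∂(gaussianReal 0 1) := by
  letI : MeasureSpace ℝ := ⟨gaussianReal 0 1⟩
  haveI : SigmaFinite (volume : Measure ℝ) :=
    inferInstanceAs (SigmaFinite (gaussianReal 0 1))
  exact MeasureTheory.integral_fintype_prod_eq_prod f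

/-- The Positive Random Feature (PRF) identity of Choromanski et al. (Section 2):
with `φ(x; z) = exp(⟨z, x⟩/d^{1/4} − ‖x‖²/(2√d))`, the attention kernel satisfies
`exp(⟨q, k⟩/√d) = E_{z ∼ N(0, I_d)}[φ(q; z) φ(k; z)]`. -/
theorem stmt13 (d : ℕ) (hd : 1 ≤ d) (q k : Fin d → ℝ) :
    ∫ z, (Real.exp ((∑ i, z i * q i) / (d : ℝ) ^ ((1 : ℝ) / 4) -
            (∑ i, (q i) ^ 2) / (2 * Real.sqrt d))) *
          (Real.exp ((∑ i, z i * k i) / (d : ℝ) ^ ((1 : ℝ) / 4) -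
            (∑ i, (k i) ^ 2) / (2 * Real.sqrt d)))
        ∂(Measure.pi fun _ : Fin d => gaussianReal 0 1) =
      Real.exp ((∑ i, q i * k i) / Real.sqrt d) := by
  have hd0 : (0:ℝ) < d := by exact_mod_cast hd
  set r : ℝ := (d : ℝ) ^ ((1:ℝ)/4) with hr
  have hr2 : r ^ 2 = Real.sqrt d := by
    rw [Real.sqrt_eq_rpow, hr, ← Real.rpow_natCast ((d:ℝ) ^ ((1:ℝ)/4)) 2,
      ← Real.rpow_mul hd0.le]
    norm_num
  have hs : Real.sqrt d ≠ 0 := (Real.sqrt_pos.mpr hd0).ne'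
  have key : ∀ z : Fin d → ℝ,
      (Real.exp ((∑ i, z i * q i) / r - (∑ i, (q i) ^ 2) / (2 * Real.sqrt d))) *
        (Real.exp ((∑ i, z i * k i) / r - (∑ i, (k i) ^ 2) / (2 * Real.sqrt d))) =
      (∏ i, Real.exp ((q i + k i) / r * z i)) *
        Real.exp (-(((∑ i, (q i) ^ 2) + ∑ i, (k i) ^ 2) / (2 * Real.sqrt d))) := by
    intro z
    rw [← Real.exp_sum, ← Real.exp_add, ← Real.exp_add]
    congr 1
    have : ∑ i, (q i + k i) / r * z i =
        (∑ i, z i * q i) / r + (∑ i, z i * k i) / r := by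
      rw [Finset.sum_div, Finset.sum_div, ← Finset.sum_add_distrib]
      exact Finset.sum_congr rfl fun i _ => by ring
    rw [this]; ring
  simp_rw [key]
  rw [integral_mul_const, pi_gauss_prod d (fun i x => Real.exp ((q i + k i) / r * x))]
  simp_rw [gauss_mgf]
  rw [← Real.exp_sum, ← Real.exp_add]
  congr 1
  have hsum : ∑ i, (q i + k i) ^ 2 =
      (∑ i, (q i) ^ 2) + 2 * (∑ i, q i * k i) + ∑ i, (k i) ^ 2 := by
    rw [Finset.mul_sum, ← Finset.sum_add_distrib, ← Finset.sum_add_distrib]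
    exact Finset.sum_congr rfl fun i _ => by ring
  simp_rw [div_pow, hr2, div_div]
  rw [← Finset.sum_div, hsum]
  field_simp
  ring
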